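/- For all δ ∈ [0,1], the inequality e^δ / (1+δ)^{1+δ} ≤ e^{−δ²/3} holds; equivalently, δ − (1+δ)·log(1+δ) + δ²/3 ≤ 0. -/

import Mathlib

open Real

lemma log_lb_aux : ∀ x ∈ Set.Icc (0:ℝ) 1, 2*x ≤ (2+x) * Real.log (1+x) := by
  have key : MonotoneOn (fun x : ℝ => (2+x) * Real.log (1+x) - 2*x) (Set.Icc 0 1) := by
    apply monotoneOn_of_deriv_nonneg (convex_Icc 0 1)
    · fun_prop (disch := intro x hx; simp at hx; nlinarith [hx.1])
    · intro x hx
      simp only [interior_Icc, Set.mem_Ioo] at hx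
      apply DifferentiableAt.differentiableWithinAt
      have h1 : (1:ℝ) + x ≠ 0 := by nlinarith [hx.1]
      fun_prop (disch := assumption)
    · intro x hx
      simp only [interior_Icc, Set.mem_Ioo] at hx
      have h1 : (0:ℝ) < 1 + x := by linarith [hx.1]
      have hd : HasDerivAt (fun x : ℝ => (2+x) * Real.log (1+x) - 2*x)
          (1 * Real.log (1+x) + (2+x) * (1/(1+x)) - 2) x := by
        have := ((hasDerivAt_id x).const_add 2).mul
          (((hasDerivAt_id x).const_add 1).log h1.ne')
        exact (this.sub ((hasDerivAt_id x).const_mul 2)).congr_deriv (by simp)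
      rw [hd.deriv]
      have hlog : 1 - (1+x)⁻¹ ≤ Real.log (1+x) := Real.one_sub_inv_le_log_of_pos h1
      have : (1+x)⁻¹ = 1/(1+x) := by ring
      rw [this] at hlog
      have : (2+x) * (1/(1+x)) = 1 + 1/(1+x) := by field_simp; ring
      rw [this]
      linarith
  intro x hx
  have := key (Set.left_mem_Icc.2 one_pos.le) hx hx.1
  simp at this
  linarith

theorem exp_div_rpow_le_upper (δ : ℝ) (h0 : 0 ≤ δ) (h1 : δ ≤ 1) :
    Real.exp δ / (1 + δ) ^ ((1 : ℝ) + δ) ≤ Real.exp (-δ ^ 2 / 3) ∧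
    δ - (1 + δ) * Real.log (1 + δ) + δ ^ 2 / 3 ≤ 0 := by
  have hδ : (0:ℝ) < 1 + δ := by linarith
  have hlb := log_lb_aux δ ⟨h0, h1⟩
  have hL : 0 ≤ Real.log (1 + δ) := Real.log_nonneg (by linarith)
  have key : δ - (1 + δ) * Real.log (1 + δ) + δ ^ 2 / 3 ≤ 0 := by
    nlinarith [mul_nonneg h0 hL, sq_nonneg δ, mul_nonneg h0 (sq_nonneg δ)]
  refine ⟨?_, key⟩
  rw [Real.rpow_def_of_pos hδ, ← Real.exp_sub, Real.exp_le_exp]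
  linarith
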